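/- Let E be a complex Banach space, V a finite-dimensional real normed vector space, C > 0 and d > 0. For each s ∈ H_{>C} let Z_s : E → ℂ be a continuous linear functional, and assume that for every v ∈ E the function s ↦ Z_s(v) is holomorphic on H_{>C} and of order at most d in vertical strips. Then for every E-valued Schwartz function f ∈ 𝒮(V, E) and every s ∈ H_{>C}, the function λ ∈ V ↦ Z_s(f(λ)) belongs to 𝒮(V), and the map s ∈ H_{>C} ↦ (λ ↦ Z_s(f(λ))) ∈ 𝒮(V) is holomorphic and of finite order in vertical strips. -/

import Mathlib

noncomputable section

section Aux
set_option linter.unusedVariables false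
set_option linter.unusedSectionVars false
open Complex Metric Set


variable {E V : Type*} [NormedAddCommGroup E] [NormedSpace ℂ E]
  [NormedAddCommGroup V] [NormedSpace ℝ V]

theorem smap_bound (f : SchwartzMap V E) (T : E →L[ℂ] ℂ) (k n : ℕ) (x : V) :
    ‖x‖ ^ k * ‖iteratedFDeriv ℝ n (fun x => T (f x)) x‖
      ≤ ‖T‖ * SchwartzMap.seminorm ℝ k n f := by
  have h1 : iteratedFDeriv ℝ n (fun x => T (f x)) x
      = (T.restrictScalars ℝ).compContinuousMultilinearMap (iteratedFDeriv ℝ n f x) :=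
    (T.restrictScalars ℝ).iteratedFDeriv_comp_left (x := x) (f.smooth ⊤).contDiffAt (by exact_mod_cast le_top)
  rw [h1]
  calc ‖x‖ ^ k * ‖(T.restrictScalars ℝ).compContinuousMultilinearMap (iteratedFDeriv ℝ n f x)‖
      ≤ ‖x‖ ^ k * (‖T‖ * ‖iteratedFDeriv ℝ n f x‖) := by
        gcongr
        · exact (T.restrictScalars ℝ).norm_compContinuousMultilinearMap_le _ |>.trans
            (by rw [T.norm_restrictScalars])
    _ = ‖T‖ * (‖x‖ ^ k * ‖iteratedFDeriv ℝ n f x‖) := by ring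
    _ ≤ ‖T‖ * SchwartzMap.seminorm ℝ k n f := by
        gcongr; exact SchwartzMap.le_seminorm ℝ k n f x

def smap (f : SchwartzMap V E) (T : E →L[ℂ] ℂ) : SchwartzMap V ℂ where
  toFun := fun x => T (f x)
  smooth' := ((T.restrictScalars ℝ).contDiff).comp (f.smooth ⊤)
  decay' := fun k n => ⟨‖T‖ * SchwartzMap.seminorm ℝ k n f, smap_bound f T k n⟩

@[simp] theorem smap_apply (f : SchwartzMap V E) (T : E →L[ℂ] ℂ) (x : V) :
    smap f T x = T (f x) := rfl

theorem smap_seminorm_le (f : SchwartzMap V E) (T : E →L[ℂ] ℂ) (k n : ℕ) :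
    SchwartzMap.seminorm ℝ k n (smap f T) ≤ ‖T‖ * SchwartzMap.seminorm ℝ k n f :=
  SchwartzMap.seminorm_le_bound ℝ k n _ (by positivity) (smap_bound f T k n)

theorem smap_sub (f : SchwartzMap V E) (T T' : E →L[ℂ] ℂ) :
    smap f (T - T') = smap f T - smap f T' := by
  ext x; simp

theorem smap_linear (f : SchwartzMap V E) :
    IsLinearMap ℂ (smap f) := by
  constructor <;> intros <;> ext x <;> simp

end Aux
section Aux2
set_option linter.unusedVariables false
set_option linter.unusedSectionVars false
open Complex Metric Set


variable {E : Type*} [NormedAddCommGroup E] [NormedSpace ℂ E] [CompleteSpace E]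

-- uniform bound on compact subsets via Banach–Steinhaus
theorem unif_bound {D : Set ℂ} (Z : ℂ → E →L[ℂ] ℂ)
    (h : ∀ v, DifferentiableOn ℂ (fun s => Z s v) D)
    {K : Set ℂ} (hK : IsCompact K) (hKD : K ⊆ D) (hDo : IsOpen D) :
    ∃ M : ℝ, 0 ≤ M ∧ ∀ s ∈ K, ‖Z s‖ ≤ M := by
  have hb : ∀ v : E, ∃ Cv : ℝ, ∀ i : K, ‖Z i v‖ ≤ Cv := by
    intro v
    rcases K.eq_empty_or_nonempty with rfl | hne
    · exact ⟨0, fun i => absurd i.2 (Set.notMem_empty _)⟩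
    obtain ⟨Cv, hCv⟩ := hK.exists_bound_of_continuousOn
      (((h v).continuousOn).mono hKD).norm
    exact ⟨Cv, fun i => by simpa using hCv i i.2⟩
  obtain ⟨M, hM⟩ := banach_steinhaus (g := fun i : K => Z i) hb
  exact ⟨max M 0, le_max_right _ _, fun s hs => (hM ⟨s, hs⟩).trans (le_max_left _ _)⟩

theorem lipschitz_est {D : Set ℂ} (hDo : IsOpen D) (Z : ℂ → E →L[ℂ] ℂ)
    (h : ∀ v, DifferentiableOn ℂ (fun s => Z s v) D)
    {s₀ : ℂ} {r : ℝ} (hr : 0 < r) (hsub : closedBall s₀ r ⊆ D)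
    {M : ℝ} (hM : ∀ s ∈ closedBall s₀ r, ‖Z s‖ ≤ M) :
    ∀ s₁ ∈ closedBall s₀ (r/4), ∀ s₂ ∈ closedBall s₀ (r/4),
      ‖Z s₂ - Z s₁‖ ≤ (2*M+1)/(2*r/3) * dist s₂ s₁ := by
  intro s₁ hs₁ s₂ hs₂
  have hM0 : 0 ≤ M := le_trans (norm_nonneg _) (hM s₀ (mem_closedBall_self hr.le))
  have hball : ball s₁ (2*r/3) ⊆ closedBall s₀ r := by
    intro z hz
    rw [mem_closedBall]
    calc dist z s₀ ≤ dist z s₁ + dist s₁ s₀ := dist_triangle _ _ _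
      _ ≤ 2*r/3 + r/4 := add_le_add (mem_ball.1 hz).le (mem_closedBall.1 hs₁)
      _ ≤ r := by linarith
  have key : ∀ v : E, ‖v‖ ≤ 1 → dist (Z s₂ v) (Z s₁ v) ≤ (2*M+1)/(2*r/3) * dist s₂ s₁ := by
    intro v hv
    have hdiff : DifferentiableOn ℂ (fun z => Z z v) (ball s₁ (2*r/3)) :=
      (h v).mono (hball.trans hsub)
    have hmaps : MapsTo (fun z => Z z v) (ball s₁ (2*r/3)) (ball (Z s₁ v) (2*M+1)) := by
      intro z hz
      rw [mem_ball, dist_eq_norm]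
      calc ‖Z z v - Z s₁ v‖ ≤ ‖Z z v‖ + ‖Z s₁ v‖ := norm_sub_le _ _
        _ ≤ M * ‖v‖ + M * ‖v‖ := by
            gcongr
            · exact (Z z).le_of_opNorm_le (hM z (hball hz)) v
            · exact (Z s₁).le_of_opNorm_le
                (hM s₁ (hball (mem_ball_self (by linarith)))) v
        _ < 2*M+1 := by nlinarith
    have hs₂' : s₂ ∈ ball s₁ (2*r/3) := by
      rw [mem_ball]
      calc dist s₂ s₁ ≤ dist s₂ s₀ + dist s₀ s₁ := dist_triangle _ _ _
        _ ≤ r/4 + r/4 := by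
            gcongr
            · exact mem_closedBall.1 hs₂
            · exact mem_closedBall'.1 hs₁
        _ < 2*r/3 := by linarith
    exact Complex.dist_le_div_mul_dist_of_mapsTo_ball hdiff (hmaps.mono_right ball_subset_closedBall) hs₂'
  refine ContinuousLinearMap.opNorm_le_bound _ (by positivity) fun v => ?_
  rcases eq_or_ne v 0 with rfl | hv
  · simp
  · have hnv : 0 < ‖v‖ := norm_pos_iff.2 hv
    have h1 : ‖(‖v‖:ℝ)⁻¹ • v‖ ≤ 1 := by
      rw [norm_smul, norm_inv, norm_norm, inv_mul_cancel₀ hnv.ne']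
    have := key ((‖v‖:ℝ)⁻¹ • v) h1
    rw [dist_eq_norm] at this
    have h2 : Z s₂ ((‖v‖:ℝ)⁻¹ • v) - Z s₁ ((‖v‖:ℝ)⁻¹ • v)
        = (‖v‖:ℝ)⁻¹ • ((Z s₂ - Z s₁) v) := by
      simp [map_smul, smul_sub]
    rw [h2, norm_smul, norm_inv, norm_norm] at this
    calc ‖(Z s₂ - Z s₁) v‖ = ‖v‖ * (‖v‖⁻¹ * ‖(Z s₂ - Z s₁) v‖) := by
          field_simp
      _ ≤ ‖v‖ * ((2*M+1)/(2*r/3) * dist s₂ s₁) := by gcongr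
      _ = (2*M+1)/(2*r/3) * dist s₂ s₁ * ‖v‖ := by ring

theorem clm_differentiableOn {D : Set ℂ} (hDo : IsOpen D) (Z : ℂ → E →L[ℂ] ℂ)
    (h : ∀ v, DifferentiableOn ℂ (fun s => Z s v) D) :
    DifferentiableOn ℂ Z D := by
  intro s₀ hs₀
  suffices hA : DifferentiableAt ℂ Z s₀ from hA.differentiableWithinAt
  obtain ⟨r', hr', hball⟩ := Metric.isOpen_iff.1 hDo s₀ hs₀
  set r : ℝ := r' / 2 with hr_def
  have hr : 0 < r := by positivity
  have hsub : closedBall s₀ r ⊆ D := by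
    refine subset_trans ?_ hball
    intro z hz
    exact lt_of_le_of_lt (mem_closedBall.1 hz) (by linarith)
  obtain ⟨M, hM0, hM⟩ := unif_bound Z h (isCompact_closedBall s₀ r) hsub hDo
  have hlip := lipschitz_est hDo Z h hr hsub hM
  -- continuity of Z on the small closed ball
  have hcont : ContinuousOn Z (closedBall s₀ (r/4)) := by
    have : LipschitzOnWith (Real.toNNReal ((2*M+1)/(2*r/3))) Z (closedBall s₀ (r/4)) := by
      refine LipschitzOnWith.of_dist_le_mul fun x hx y hy => ?_
      rw [dist_eq_norm, Real.coe_toNNReal _ (by positivity)]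
      exact hlip y hy x hx
    exact this.continuousOn
  set ρ : ℝ := r / 8 with hρ_def
  have hρ : 0 < ρ := by positivity
  have hsph : sphere s₀ ρ ⊆ closedBall s₀ (r/4) := by
    intro z hz
    rw [mem_closedBall, mem_sphere.1 hz]
    linarith
  have hcball : closedBall s₀ ρ ⊆ D := fun z hz => hsub (closedBall_subset_closedBall (by linarith : ρ ≤ r) hz)
  have hint : CircleIntegrable Z s₀ ρ :=
    ContinuousOn.circleIntegrable hρ.le (hcont.mono hsph)
  set ρ' : NNReal := ⟨ρ, hρ.le⟩ with hρ'_def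
  have hps := hasFPowerSeriesOn_cauchy_integral (f := Z) (R := ρ') (by exact_mod_cast hint) (by exact_mod_cast hρ)
  set W : ℂ → E →L[ℂ] ℂ :=
    fun w => (2 * Real.pi * I : ℂ)⁻¹ • ∮ z in C(s₀, ρ), (z - w)⁻¹ • Z z with hW_def
  have hWZ : ∀ w ∈ ball s₀ ρ, W w = Z w := by
    intro w hw
    ext v
    have hFi : IntervalIntegrable
        (fun θ : ℝ => deriv (circleMap s₀ ρ) θ • ((circleMap s₀ ρ θ - w)⁻¹ • Z (circleMap s₀ ρ θ)))
        MeasureTheory.volume 0 (2 * Real.pi) := by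
      have : CircleIntegrable (fun z => (z - w)⁻¹ • Z z) s₀ ρ := by
        refine ContinuousOn.circleIntegrable hρ.le (ContinuousOn.fun_smul ?_ (hcont.mono hsph))
        refine ContinuousOn.inv₀ (by fun_prop) ?_
        intro z hz
        rw [sub_ne_zero]
        rintro rfl
        exact (mem_ball.1 hw).not_ge (le_of_eq (mem_sphere.1 hz).symm)
      exact this.out
    have happ := (ContinuousLinearMap.apply ℂ ℂ v).intervalIntegral_comp_comm hFi
    have hgoal : (W w) v = (2 * Real.pi * I : ℂ)⁻¹ •
        ∮ z in C(s₀, ρ), (z - w)⁻¹ • Z z v := by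
      rw [hW_def]
      simp only [ContinuousLinearMap.coe_smul', Pi.smul_apply]
      congr 1
      rw [circleIntegral, circleIntegral]
      show (ContinuousLinearMap.apply ℂ ℂ v)
          (∫ θ in (0:ℝ)..(2*Real.pi), deriv (circleMap s₀ ρ) θ •
            ((circleMap s₀ ρ θ - w)⁻¹ • Z (circleMap s₀ ρ θ))) = _
      rw [← happ]
      refine intervalIntegral.integral_congr fun θ _ => ?_
      simp
    rw [hgoal]
    have hdc : DiffContOnCl ℂ (fun z => Z z v) (ball s₀ ρ) := by
      refine DifferentiableOn.diffContOnCl ?_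
      refine (h v).mono ?_
      rw [closure_ball s₀ hρ.ne']
      exact hcball
    have := hdc.two_pi_i_inv_smul_circleIntegral_sub_inv_smul hw
    simpa using this
  have hWana : AnalyticAt ℂ W s₀ := by
    refine hps.analyticAt
  have : Z =ᶠ[nhds s₀] W :=
    Filter.eventuallyEq_of_mem (isOpen_ball.mem_nhds (mem_ball_self hρ)) fun w hw => (hWZ w hw).symm
  exact this.differentiableAt_iff.2 hWana.differentiableAt

end Aux2


/-- A scalar function `φ : ℂ → ℂ` is of order at most `d` in vertical strips of `D`:
for every `d' > d`, `z ↦ exp (-|z| ^ d') * |φ z|` is bounded on every vertical strip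
`{z | a ≤ Re z ≤ b}` intersected with `D`. -/
def OrderAtMostOn (D : Set ℂ) (φ : ℂ → ℂ) (d : ℝ) : Prop :=
  ∀ d' : ℝ, d < d' → ∀ a b : ℝ, ∃ M : ℝ, ∀ z ∈ D, a ≤ z.re → z.re ≤ b →
    Real.exp (-(‖z‖ ^ d')) * ‖φ z‖ ≤ M

/-- A map `Z` from `D ⊆ ℂ` to the Schwartz space `𝒮(V)` is of finite order in vertical
strips of `D`: there is `d > 0` such that for every `d' > d` and every Schwartz seminorm
`p_{k,n}`, `s ↦ exp (-|s| ^ d') * p_{k,n} (Z s)` is bounded in vertical strips of `D`. -/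
def SchwartzFiniteOrderOn {V : Type*} [NormedAddCommGroup V] [NormedSpace ℝ V]
    (D : Set ℂ) (Z : ℂ → SchwartzMap V ℂ) : Prop :=
  ∃ d : ℝ, 0 < d ∧ ∀ d' : ℝ, d < d' → ∀ k n : ℕ, ∀ a b : ℝ, ∃ M : ℝ,
    ∀ s ∈ D, a ≤ s.re → s.re ≤ b →
      Real.exp (-(‖s‖ ^ d')) * SchwartzMap.seminorm ℝ k n (Z s) ≤ M

/-- Banach case of the paper's Lemma on holomorphic families of functionals applied to
Schwartz functions: if `s ↦ Z_s ∈ E'` is a family of continuous linear functionals on a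
right half-plane `H_{>C}`, holomorphic and of order at most `d` in vertical strips in
every orbit `s ↦ Z_s(v)`, then for every `E`-valued Schwartz function `f ∈ 𝒮(V, E)` the
function `λ ↦ Z_s(f(λ))` is Schwartz for each `s`, and the resulting Schwartz-space-valued
map is holomorphic (continuous and weakly holomorphic) and of finite order in vertical
strips of the half-plane. -/
theorem stmt3 {E V : Type*}
    [NormedAddCommGroup E] [NormedSpace ℂ E] [CompleteSpace E]
    [NormedAddCommGroup V] [NormedSpace ℝ V] [FiniteDimensional ℝ V]
    (C d : ℝ) (hC : 0 < C) (hd : 0 < d)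
    (Z : ℂ → E →L[ℂ] ℂ)
    (hZhol : ∀ v : E, DifferentiableOn ℂ (fun s => Z s v) {z : ℂ | C < z.re})
    (hZord : ∀ v : E, OrderAtMostOn {z : ℂ | C < z.re} (fun s => Z s v) d)
    (f : SchwartzMap V E) :
    ∃ G : ℂ → SchwartzMap V ℂ,
      (∀ s : ℂ, C < s.re → ∀ l : V, G s l = Z s (f l)) ∧
      ContinuousOn G {z : ℂ | C < z.re} ∧
      (∀ u : SchwartzMap V ℂ →L[ℂ] ℂ,
        DifferentiableOn ℂ (fun s => u (G s)) {z : ℂ | C < z.re}) ∧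
      SchwartzFiniteOrderOn {z : ℂ | C < z.re} G := by
  classical
  set D : Set ℂ := {z : ℂ | C < z.re} with hD_def
  have hDo : IsOpen D := isOpen_lt continuous_const Complex.continuous_re
  have hZd : DifferentiableOn ℂ Z D := clm_differentiableOn hDo Z hZhol
  have hZc : ContinuousOn Z D := hZd.continuousOn
  refine ⟨fun s => smap f (Z s), fun s _ l => rfl, ?_, ?_, ?_⟩
  · -- continuity
    intro s₀ hs₀
    rw [ContinuousWithinAt, (schwartz_withSeminorms ℝ V ℂ).tendsto_nhds]
    rintro ⟨k, n⟩ ε hε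
    have htend : Filter.Tendsto (fun s => ‖Z s - Z s₀‖ * SchwartzMap.seminorm ℝ k n f)
        (nhdsWithin s₀ D) (nhds (0 : ℝ)) := by
      have h0 : Filter.Tendsto (fun s => Z s - Z s₀) (nhdsWithin s₀ D) (nhds 0) :=
        tendsto_sub_nhds_zero_iff.2 (hZc s₀ hs₀)
      have := (h0.norm.mul_const (SchwartzMap.seminorm ℝ k n f))
      simpa using this
    filter_upwards [htend.eventually (gt_mem_nhds hε)] with s hs
    calc schwartzSeminormFamily ℝ V ℂ (k, n) (smap f (Z s) - smap f (Z s₀))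
        = SchwartzMap.seminorm ℝ k n (smap f (Z s - Z s₀)) := by
          rw [SchwartzMap.schwartzSeminormFamily_apply, smap_sub]
      _ ≤ ‖Z s - Z s₀‖ * SchwartzMap.seminorm ℝ k n f := smap_seminorm_le f _ k n
      _ < ε := hs
  · -- weak holomorphy
    intro u
    have hsmapc : Continuous (smap f) := by
      rw [continuous_iff_continuousAt]
      intro T₀
      rw [ContinuousAt, (schwartz_withSeminorms ℝ V ℂ).tendsto_nhds]
      rintro ⟨k, n⟩ ε hε
      have htend : Filter.Tendsto (fun T : E →L[ℂ] ℂ => ‖T - T₀‖ * SchwartzMap.seminorm ℝ k n f)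
          (nhds T₀) (nhds (0 : ℝ)) := by
        have h0 : Filter.Tendsto (fun T : E →L[ℂ] ℂ => T - T₀) (nhds T₀) (nhds 0) :=
          tendsto_sub_nhds_zero_iff.2 Filter.tendsto_id
        simpa using h0.norm.mul_const (SchwartzMap.seminorm ℝ k n f)
      filter_upwards [htend.eventually (gt_mem_nhds hε)] with T hT
      calc schwartzSeminormFamily ℝ V ℂ (k, n) (smap f T - smap f T₀)
          = SchwartzMap.seminorm ℝ k n (smap f (T - T₀)) := by
            rw [SchwartzMap.schwartzSeminormFamily_apply, smap_sub]
        _ ≤ ‖T - T₀‖ * SchwartzMap.seminorm ℝ k n f := smap_seminorm_le f _ k n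
        _ < ε := hT
    set smapL : (E →L[ℂ] ℂ) →L[ℂ] SchwartzMap V ℂ :=
      { toFun := smap f
        map_add' := (smap_linear f).map_add
        map_smul' := (smap_linear f).map_smul
        cont := hsmapc } with hsmapL_def
    have : (fun s => u (smap f (Z s))) = (fun s => (u.comp smapL) (Z s)) := rfl
    rw [this]
    exact (u.comp smapL).differentiable.comp_differentiableOn hZd
  · -- finite order
    refine ⟨d, hd, fun d' hd' k n a b => ?_⟩
    set S : Set ℂ := {s : ℂ | s ∈ D ∧ a ≤ s.re ∧ s.re ≤ b} with hS_def
    have hpt : ∀ v : E, ∃ Cv : ℝ, ∀ i : S,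
        ‖(Real.exp (-(‖(i : ℂ)‖ ^ d')) • Z (i : ℂ)) v‖ ≤ Cv := by
      intro v
      obtain ⟨Mv, hMv⟩ := hZord v d' hd' a b
      refine ⟨Mv, fun i => ?_⟩
      have := hMv (i : ℂ) i.2.1 i.2.2.1 i.2.2.2
      calc ‖(Real.exp (-(‖(i : ℂ)‖ ^ d')) • Z (i : ℂ)) v‖
          = Real.exp (-(‖(i : ℂ)‖ ^ d')) * ‖Z (i : ℂ) v‖ := by
            rw [ContinuousLinearMap.coe_smul', Pi.smul_apply, norm_smul,
              Real.norm_eq_abs, abs_of_pos (Real.exp_pos _)]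
        _ ≤ Mv := this
    obtain ⟨M', hM'⟩ := banach_steinhaus
      (g := fun i : S => Real.exp (-(‖(i : ℂ)‖ ^ d')) • Z (i : ℂ)) hpt
    refine ⟨M' * SchwartzMap.seminorm ℝ k n f, fun s hs ha hb => ?_⟩
    have hmem : s ∈ S := ⟨hs, ha, hb⟩
    have h1 : Real.exp (-(‖s‖ ^ d')) * SchwartzMap.seminorm ℝ k n (smap f (Z s))
        ≤ Real.exp (-(‖s‖ ^ d')) * (‖Z s‖ * SchwartzMap.seminorm ℝ k n f) :=
      mul_le_mul_of_nonneg_left (smap_seminorm_le f (Z s) k n) (Real.exp_pos _).le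
    have h2 : Real.exp (-(‖s‖ ^ d')) * ‖Z s‖
        = ‖Real.exp (-(‖s‖ ^ d')) • Z s‖ := by
      rw [norm_smul (Real.exp (-(‖s‖ ^ d'))) (Z s), Real.norm_eq_abs,
        abs_of_pos (Real.exp_pos _)]
    calc Real.exp (-(‖s‖ ^ d')) * SchwartzMap.seminorm ℝ k n (smap f (Z s))
        ≤ Real.exp (-(‖s‖ ^ d')) * (‖Z s‖ * SchwartzMap.seminorm ℝ k n f) := h1
      _ = ‖Real.exp (-(‖s‖ ^ d')) • Z s‖ * SchwartzMap.seminorm ℝ k n f := by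
          rw [← h2]; ring
      _ ≤ M' * SchwartzMap.seminorm ℝ k n f :=
          mul_le_mul_of_nonneg_right (hM' ⟨s, hmem⟩) (apply_nonneg _ _)
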